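/- arXiv:1606.05046 — 3 statements merged into one kernel-verified Lean document; each statement's English description precedes it below -/
import Mathlib

section
/- (Theorem 1, prediction-step sufficiency.) Suppose there exist reals τu, τw, τv, τf, τh ≥ 0 and τy ∈ ℝ such that the m×m symmetric matrix ΦᵀP⁻¹Φ − Ξ − τy·ΨᵀΨ is negative semidefinite. Then for all u, w, δf ∈ ℝⁿ and v, δh ∈ ℝ^{n₁} with ‖u‖ ≤ 1, wᵀQ⁻¹w ≤ 1, vᵀR⁻¹v ≤ 1, ‖δf‖ ≤ 1, ‖δh‖ ≤ 1 (Euclidean norms) that satisfy the exact linearization identities f(x̂ + E₀u) = f(x̂) + J_f E₀ u + e_f + B_f δf and hₘ(x̂ + E₀u) = hₘ(x̂) + J_h E₀ u + e_h + B_h δh together with the measurement equation y = hₘ(x̂ + E₀u) + v, the one-step-ahead state x⁺ := f(x̂ + E₀u) + w satisfies (x⁺ − x̂ₚ)ᵀ P⁻¹ (x⁺ − x̂ₚ) ≤ 1, i.e. x⁺ lies in the ellipsoid with center x̂ₚ and shape matrix P. -/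
noncomputable section

/-- Matrix–vector multiplication, viewed as a map between Euclidean spaces. -/
def mvr {k l : ℕ} (M : Matrix (Fin k) (Fin l) ℝ) (v : EuclideanSpace ℝ (Fin l)) :
    EuclideanSpace ℝ (Fin k) := WithLp.toLp 2 (M.mulVec v)

/-- A vector viewed as a one-column matrix. -/
def colOf {k : ℕ} (v : EuclideanSpace ℝ (Fin k)) : Matrix (Fin k) (Fin 1) ℝ :=
  Matrix.of fun i _ => v i

/-- A real matrix is negative semidefinite iff its negation is positive semidefinite. -/
def Matrix.NegSemidef' {m : Type*} [Fintype m] (M : Matrix m m ℝ) : Prop :=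
  (-M).PosSemidef

/-- Index type for `ℝ^m` with `m = 1 + 3n + 2n₁`, split into six blocks of sizes
`1, n, n, n₁, n, n₁` (corresponding to the components `1, u, w, v, δf, δh`). -/
abbrev Idx6 (n n₁ : ℕ) := Fin 1 ⊕ (Fin n ⊕ (Fin n ⊕ (Fin n₁ ⊕ (Fin n ⊕ Fin n₁))))

/-- The block matrix `Φ = [f(x̂)+e_f−x̂ₚ ∣ J_f E₀ ∣ Iₙ ∣ 0 ∣ B_f ∣ 0]`. -/
def Phi6 {n n₁ : ℕ} (fxh ef xhp : EuclideanSpace ℝ (Fin n))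
    (Jf E₀ Bf : Matrix (Fin n) (Fin n) ℝ) : Matrix (Fin n) (Idx6 n n₁) ℝ :=
  Matrix.fromCols (colOf (fxh + ef - xhp))
    (Matrix.fromCols (Jf * E₀)
      (Matrix.fromCols 1
        (Matrix.fromCols 0
          (Matrix.fromCols Bf 0))))

/-- The block matrix `Ψ = [hₘ(x̂)+e_h−y ∣ J_h E₀ ∣ 0 ∣ I_{n₁} ∣ 0 ∣ B_h]`. -/
def Psi6 {n n₁ : ℕ} (hxh eh y : EuclideanSpace ℝ (Fin n₁))
    (JhM : Matrix (Fin n₁) (Fin n) ℝ) (E₀ : Matrix (Fin n) (Fin n) ℝ)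
    (Bh : Matrix (Fin n₁) (Fin n₁) ℝ) : Matrix (Fin n₁) (Idx6 n n₁) ℝ :=
  Matrix.fromCols (colOf (hxh + eh - y))
    (Matrix.fromCols (JhM * E₀)
      (Matrix.fromCols 0
        (Matrix.fromCols 1
          (Matrix.fromCols 0 Bh))))

/-- The block-diagonal multiplier matrix
`Ξ = diag(1−τu−τw−τv−τf−τh, τu Iₙ, τw Q⁻¹, τv R⁻¹, τf Iₙ, τh I_{n₁})`. -/
def Xi6 {n n₁ : ℕ} (Q : Matrix (Fin n) (Fin n) ℝ) (R : Matrix (Fin n₁) (Fin n₁) ℝ)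
    (τu τw τv τf τh : ℝ) : Matrix (Idx6 n n₁) (Idx6 n n₁) ℝ :=
  Matrix.fromBlocks ((1 - τu - τw - τv - τf - τh) • (1 : Matrix (Fin 1) (Fin 1) ℝ)) 0 0
    (Matrix.fromBlocks (τu • (1 : Matrix (Fin n) (Fin n) ℝ)) 0 0
      (Matrix.fromBlocks (τw • Q⁻¹) 0 0
        (Matrix.fromBlocks (τv • R⁻¹) 0 0
          (Matrix.fromBlocks (τf • (1 : Matrix (Fin n) (Fin n) ℝ)) 0 0
            (τh • (1 : Matrix (Fin n₁) (Fin n₁) ℝ))))))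

private lemma dot_self_le_one {k : ℕ} (x : EuclideanSpace ℝ (Fin k)) (hx : ‖x‖ ≤ 1) :
    dotProduct (fun i => x i) (fun i => x i) ≤ 1 := by
  have h1 : dotProduct (fun i => x i) (fun i => x i) = ‖x‖ ^ 2 := by
    rw [EuclideanSpace.norm_eq, Real.sq_sqrt (by positivity)]
    simp [dotProduct, Real.norm_eq_abs, sq_abs, pow_two]
  rw [h1]
  nlinarith [norm_nonneg x]

/-- **Theorem 1 (prediction-step sufficiency).** If there are multipliers
`τu, τw, τv, τf, τh ≥ 0` and `τy ∈ ℝ` with `ΦᵀP⁻¹Φ − Ξ − τy·ΨᵀΨ ⪯ 0`, then every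
admissible `(u, w, v, δf, δh)` consistent with the exact linearizations and the
measurement equation yields a one-step-ahead state `x⁺ = f(x̂+E₀u) + w` lying in the
ellipsoid with center `x̂ₚ` and shape matrix `P`. -/
theorem prediction_step_sufficiency
    {n n₁ : ℕ} (hn : 0 < n) (hn₁ : 0 < n₁)
    (f : EuclideanSpace ℝ (Fin n) → EuclideanSpace ℝ (Fin n))
    (hM : EuclideanSpace ℝ (Fin n) → EuclideanSpace ℝ (Fin n₁))
    (xh : EuclideanSpace ℝ (Fin n)) (E₀ Jf : Matrix (Fin n) (Fin n) ℝ)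
    (JhM : Matrix (Fin n₁) (Fin n) ℝ)
    (ef : EuclideanSpace ℝ (Fin n)) (Bf : Matrix (Fin n) (Fin n) ℝ)
    (eh : EuclideanSpace ℝ (Fin n₁)) (Bh : Matrix (Fin n₁) (Fin n₁) ℝ)
    (y : EuclideanSpace ℝ (Fin n₁)) (xhp : EuclideanSpace ℝ (Fin n))
    (P Q : Matrix (Fin n) (Fin n) ℝ) (R : Matrix (Fin n₁) (Fin n₁) ℝ)
    (hP : P.PosDef) (hQ : Q.PosDef) (hR : R.PosDef)
    (τu τw τv τf τh τy : ℝ)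
    (hτu : 0 ≤ τu) (hτw : 0 ≤ τw) (hτv : 0 ≤ τv) (hτf : 0 ≤ τf) (hτh : 0 ≤ τh)
    (hLMI : Matrix.NegSemidef'
      ((Phi6 (n₁ := n₁) (f xh) ef xhp Jf E₀ Bf).transpose * P⁻¹ *
          Phi6 (n₁ := n₁) (f xh) ef xhp Jf E₀ Bf -
        Xi6 Q R τu τw τv τf τh -
        τy • ((Psi6 (hM xh) eh y JhM E₀ Bh).transpose * Psi6 (hM xh) eh y JhM E₀ Bh))) :
    ∀ (u w δf : EuclideanSpace ℝ (Fin n)) (v δh : EuclideanSpace ℝ (Fin n₁)),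
      ‖u‖ ≤ 1 →
      dotProduct (fun i => w i) (Q⁻¹.mulVec fun i => w i) ≤ 1 →
      dotProduct (fun i => v i) (R⁻¹.mulVec fun i => v i) ≤ 1 →
      ‖δf‖ ≤ 1 → ‖δh‖ ≤ 1 →
      f (xh + mvr E₀ u) = f xh + mvr Jf (mvr E₀ u) + ef + mvr Bf δf →
      hM (xh + mvr E₀ u) = hM xh + mvr JhM (mvr E₀ u) + eh + mvr Bh δh →
      y = hM (xh + mvr E₀ u) + v →
      dotProduct (fun i => (f (xh + mvr E₀ u) + w - xhp) i)
        (P⁻¹.mulVec fun i => (f (xh + mvr E₀ u) + w - xhp) i) ≤ 1 := by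
  intro u w δf v δh hu hw hv hδf hδh hlinf hlinh hmeas
  classical
  set ξ : Idx6 n n₁ → ℝ :=
    Sum.elim (fun _ => (1:ℝ))
      (Sum.elim (fun i => u i)
        (Sum.elim (fun i => w i)
          (Sum.elim (fun i => v i)
            (Sum.elim (fun i => δf i) (fun i => δh i))))) with hξdef
  -- Φ ξ equals the prediction error
  have hPhi : (Phi6 (n₁ := n₁) (f xh) ef xhp Jf E₀ Bf).mulVec ξ
      = fun i => (f (xh + mvr E₀ u) + w - xhp) i := by
    funext i
    rw [hlinf]
    simp only [hξdef, Phi6, Matrix.fromCols_mulVec_sumElim, Matrix.one_mulVec,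
      Matrix.zero_mulVec, mvr, Matrix.mulVec_mulVec, PiLp.toLp_apply, WithLp.ofLp_toLp]
    simp only [colOf, PiLp.add_apply, PiLp.sub_apply, Pi.add_apply, Pi.sub_apply, Pi.zero_apply,
      Matrix.mulVec, dotProduct, Matrix.of_apply,
      Finset.univ_unique, Finset.sum_singleton, mul_one]
    ring
  -- Ψ ξ = 0
  have hPsi : (Psi6 (hM xh) eh y JhM E₀ Bh).mulVec ξ = 0 := by
    have hy : y = hM xh + mvr JhM (mvr E₀ u) + eh + mvr Bh δh + v := by
      rw [hmeas, hlinh]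
    funext i
    rw [hy]
    simp only [hξdef, Psi6, Matrix.fromCols_mulVec_sumElim, Matrix.one_mulVec,
      Matrix.zero_mulVec, mvr, Matrix.mulVec_mulVec, PiLp.toLp_apply, WithLp.ofLp_toLp]
    simp only [colOf, PiLp.add_apply, PiLp.sub_apply, Pi.add_apply, Pi.sub_apply, Pi.zero_apply,
      Matrix.mulVec, dotProduct, Matrix.of_apply,
      Finset.univ_unique, Finset.sum_singleton, mul_one]
    ring
  -- quadratic form of Ξ
  have hXi : dotProduct ξ ((Xi6 Q R τu τw τv τf τh).mulVec ξ)
      = (1 - τu - τw - τv - τf - τh)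
        + τu * dotProduct (fun i => u i) (fun i => u i)
        + τw * dotProduct (fun i => w i) (Q⁻¹.mulVec fun i => w i)
        + τv * dotProduct (fun i => v i) (R⁻¹.mulVec fun i => v i)
        + τf * dotProduct (fun i => δf i) (fun i => δf i)
        + τh * dotProduct (fun i => δh i) (fun i => δh i) := by
    simp only [hξdef, Xi6, Matrix.fromBlocks_mulVec, Sum.elim_comp_inl, Sum.elim_comp_inr,
      Matrix.zero_mulVec, add_zero, zero_add, sumElim_dotProduct_sumElim,
      Matrix.smul_mulVec, Matrix.one_mulVec, dotProduct_smul, smul_eq_mul]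
    simp only [dotProduct, Finset.univ_unique, Finset.sum_singleton, mul_one]
    ring
  -- the LMI evaluated at ξ
  have hq := (show Matrix.PosSemidef _ from hLMI).dotProduct_mulVec_nonneg ξ
  have hstar : star ξ = ξ := by
    funext i; simp
  rw [hstar] at hq
  rw [Matrix.neg_mulVec, dotProduct_neg, Matrix.sub_mulVec, Matrix.sub_mulVec,
    dotProduct_sub, dotProduct_sub, Matrix.smul_mulVec,
    dotProduct_smul] at hq
  have hquadPhi : dotProduct ξ
      (((Phi6 (n₁ := n₁) (f xh) ef xhp Jf E₀ Bf).transpose * P⁻¹ *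
        Phi6 (n₁ := n₁) (f xh) ef xhp Jf E₀ Bf).mulVec ξ)
      = dotProduct (fun i => (f (xh + mvr E₀ u) + w - xhp) i)
          (P⁻¹.mulVec fun i => (f (xh + mvr E₀ u) + w - xhp) i) := by
    rw [Matrix.mul_assoc, ← Matrix.mulVec_mulVec, Matrix.dotProduct_mulVec,
      Matrix.vecMul_transpose, ← Matrix.mulVec_mulVec, hPhi]

  have hquadPsi : dotProduct ξ
      (((Psi6 (hM xh) eh y JhM E₀ Bh).transpose * Psi6 (hM xh) eh y JhM E₀ Bh).mulVec ξ) = 0 := by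
    rw [← Matrix.mulVec_mulVec, hPsi, Matrix.mulVec_zero, dotProduct_zero]
  rw [hquadPhi, hquadPsi, hXi] at hq
  simp only [smul_eq_mul, mul_zero] at hq
  have hu' := dot_self_le_one u hu
  have hδf' := dot_self_le_one δf hδf
  have hδh' := dot_self_le_one δh hδh
  nlinarith [mul_le_mul_of_nonneg_left hu' hτu, mul_le_mul_of_nonneg_left hw hτw,
    mul_le_mul_of_nonneg_left hv hτv, mul_le_mul_of_nonneg_left hδf' hτf,
    mul_le_mul_of_nonneg_left hδh' hτh]
end
end

section
/- (Theorem 2, measurement-update sufficiency.) Suppose there exist reals τu, τv, τh ≥ 0 and τy ∈ ℝ such that the m×m symmetric matrix ΦᵀP⁻¹Φ − Ξ − τy·ΨᵀΨ is negative semidefinite. Then for all u ∈ ℝⁿ and v, δh ∈ ℝ^{n₁} with ‖u‖ ≤ 1, vᵀR⁻¹v ≤ 1, ‖δh‖ ≤ 1 (Euclidean norms) that satisfy the exact linearization identity hₘ(x̂ₚ + E₀u) = hₘ(x̂ₚ) + J_h E₀ u + e_h + B_h δh and the measurement equation y = hₘ(x̂ₚ + E₀u) + v, the state x := x̂ₚ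 + E₀ u satisfies (x − x̂ᵤ)ᵀ P⁻¹ (x − x̂ᵤ) ≤ 1, i.e. x lies in the ellipsoid with center x̂ᵤ and shape matrix P. -/
noncomputable section

/-- Index type for `ℝ^m` with `m = 1 + n + 2n₁`, split into four blocks of sizes
`1, n, n₁, n₁` (corresponding to the components `1, u, v, δh`). -/
abbrev Idx4 (n n₁ : ℕ) := Fin 1 ⊕ (Fin n ⊕ (Fin n₁ ⊕ Fin n₁))

/-- The block matrix `Φ = [x̂ₚ−x̂ᵤ ∣ E₀ ∣ 0 ∣ 0]`. -/
def Phi4 {n n₁ : ℕ} (xhp xhu : EuclideanSpace ℝ (Fin n))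
    (E₀ : Matrix (Fin n) (Fin n) ℝ) : Matrix (Fin n) (Idx4 n n₁) ℝ :=
  Matrix.fromCols (colOf (xhp - xhu))
    (Matrix.fromCols E₀ (Matrix.fromCols 0 0))

/-- The block matrix `Ψ = [hₘ(x̂ₚ)+e_h−y ∣ J_h E₀ ∣ I_{n₁} ∣ B_h]`. -/
def Psi4 {n n₁ : ℕ} (hxhp eh y : EuclideanSpace ℝ (Fin n₁))
    (JhM : Matrix (Fin n₁) (Fin n) ℝ) (E₀ : Matrix (Fin n) (Fin n) ℝ)
    (Bh : Matrix (Fin n₁) (Fin n₁) ℝ) : Matrix (Fin n₁) (Idx4 n n₁) ℝ :=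
  Matrix.fromCols (colOf (hxhp + eh - y))
    (Matrix.fromCols (JhM * E₀) (Matrix.fromCols 1 Bh))

/-- The block-diagonal multiplier matrix
`Ξ = diag(1−τu−τv−τh, τu Iₙ, τv R⁻¹, τh I_{n₁})`. -/
def Xi4 {n n₁ : ℕ} (R : Matrix (Fin n₁) (Fin n₁) ℝ) (τu τv τh : ℝ) :
    Matrix (Idx4 n n₁) (Idx4 n n₁) ℝ :=
  Matrix.fromBlocks ((1 - τu - τv - τh) • (1 : Matrix (Fin 1) (Fin 1) ℝ)) 0 0
    (Matrix.fromBlocks (τu • (1 : Matrix (Fin n) (Fin n) ℝ)) 0 0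
      (Matrix.fromBlocks (τv • R⁻¹) 0 0
        (τh • (1 : Matrix (Fin n₁) (Fin n₁) ℝ))))

open Matrix in
private theorem dummy_open : True := trivial

open Matrix

/-- **Theorem 2 (measurement-update sufficiency).** If there are multipliers
`τu, τv, τh ≥ 0` and `τy ∈ ℝ` with `ΦᵀP⁻¹Φ − Ξ − τy·ΨᵀΨ ⪯ 0`, then every admissible
`(u, v, δh)` consistent with the exact linearization and the measurement equation yields a
state `x = x̂ₚ + E₀u` lying in the ellipsoid with center `x̂ᵤ` and shape matrix `P`. -/
theorem measurement_update_sufficiency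
    {n n₁ : ℕ} (hn : 0 < n) (hn₁ : 0 < n₁)
    (hM : EuclideanSpace ℝ (Fin n) → EuclideanSpace ℝ (Fin n₁))
    (xhp : EuclideanSpace ℝ (Fin n)) (E₀ : Matrix (Fin n) (Fin n) ℝ)
    (JhM : Matrix (Fin n₁) (Fin n) ℝ)
    (eh : EuclideanSpace ℝ (Fin n₁)) (Bh : Matrix (Fin n₁) (Fin n₁) ℝ)
    (y : EuclideanSpace ℝ (Fin n₁)) (xhu : EuclideanSpace ℝ (Fin n))
    (P : Matrix (Fin n) (Fin n) ℝ) (R : Matrix (Fin n₁) (Fin n₁) ℝ)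
    (hP : P.PosDef) (hR : R.PosDef)
    (τu τv τh τy : ℝ)
    (hτu : 0 ≤ τu) (hτv : 0 ≤ τv) (hτh : 0 ≤ τh)
    (hLMI : Matrix.NegSemidef'
      ((Phi4 (n₁ := n₁) xhp xhu E₀).transpose * P⁻¹ * Phi4 (n₁ := n₁) xhp xhu E₀ -
        Xi4 R τu τv τh -
        τy • ((Psi4 (hM xhp) eh y JhM E₀ Bh).transpose * Psi4 (hM xhp) eh y JhM E₀ Bh))) :
    ∀ (u : EuclideanSpace ℝ (Fin n)) (v δh : EuclideanSpace ℝ (Fin n₁)),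
      ‖u‖ ≤ 1 →
      dotProduct (fun i => v i) (R⁻¹.mulVec fun i => v i) ≤ 1 →
      ‖δh‖ ≤ 1 →
      hM (xhp + mvr E₀ u) = hM xhp + mvr JhM (mvr E₀ u) + eh + mvr Bh δh →
      y = hM (xhp + mvr E₀ u) + v →
      dotProduct (fun i => (xhp + mvr E₀ u - xhu) i)
        (P⁻¹.mulVec fun i => (xhp + mvr E₀ u - xhu) i) ≤ 1 := by
  intro u v δh hu hv hδ hlin hmeas
  classical
  -- the certificate vector ξ = (1, u, v, δh)
  set ξ : Idx4 n n₁ → ℝ :=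
    Sum.elim (fun _ : Fin 1 => (1 : ℝ)) (Sum.elim (fun i => u i) (Sum.elim (fun i => v i) (fun i => δh i))) with hξ
  have hself : ∀ {k : ℕ} (x : EuclideanSpace ℝ (Fin k)),
      dotProduct (fun i => x i) (fun i => x i) = ‖x‖ ^ 2 := by
    intro k x
    rw [← real_inner_self_eq_norm_sq]
    simp [dotProduct, PiLp.inner_apply, RCLike.inner_apply, mul_comm]
    rw [EuclideanSpace.norm_eq, Real.sq_sqrt (Finset.sum_nonneg fun i _ => by positivity)]
    simp [sq]
  -- Φ ξ = x - x̂ᵤ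
  have hΦ : (Phi4 (n₁ := n₁) xhp xhu E₀) *ᵥ ξ = (fun i => (xhp + mvr E₀ u - xhu) i) := by
    funext i
    simp [Phi4, hξ, Matrix.fromCols_mulVec_sumElim, colOf, Matrix.mulVec, mvr,
      dotProduct, sub_eq_add_neg]
    ring
  -- Ψ ξ = 0
  have hΨ : (Psi4 (hM xhp) eh y JhM E₀ Bh) *ᵥ ξ = 0 := by
    have h0 : ∀ i, (hM xhp) i + (mvr JhM (mvr E₀ u)) i + eh i + (mvr Bh δh) i + v i = y i := by
      intro i
      have := congrFun (congrArg (fun z => (z.ofLp : Fin n₁ → ℝ)) hmeas) i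
      rw [hlin] at this
      simpa [mvr] using this.symm
    funext i
    have h0i := h0 i
    simp only [Psi4, hξ, Matrix.fromCols_mulVec_sumElim, ← Matrix.mulVec_mulVec,
      Matrix.one_mulVec, Pi.add_apply, Pi.zero_apply]
    simp [colOf, Matrix.mulVec, dotProduct, mvr, -Matrix.mulVec_mulVec] at h0i ⊢
    linarith
  -- quadratic form inequality from the LMI
  have hq := Matrix.PosSemidef.dotProduct_mulVec_nonneg hLMI ξ
  have hstar : star ξ = ξ := by funext i; simp
  rw [hstar] at hq
  -- expand the three quadratic forms
  have eΦ : ξ ⬝ᵥ ((Phi4 (n₁ := n₁) xhp xhu E₀).transpose * P⁻¹ * Phi4 (n₁ := n₁) xhp xhu E₀) *ᵥ ξ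
      = dotProduct (fun i => (xhp + mvr E₀ u - xhu) i)
          (P⁻¹.mulVec fun i => (xhp + mvr E₀ u - xhu) i) := by
    rw [← Matrix.mulVec_mulVec, ← Matrix.mulVec_mulVec, dotProduct_mulVec,
      Matrix.vecMul_transpose, hΦ]
  have eΨ : ξ ⬝ᵥ ((Psi4 (hM xhp) eh y JhM E₀ Bh).transpose * Psi4 (hM xhp) eh y JhM E₀ Bh) *ᵥ ξ
      = 0 := by
    rw [← Matrix.mulVec_mulVec, dotProduct_mulVec, Matrix.vecMul_transpose, hΨ]
    simp
  have eΞ : ξ ⬝ᵥ (Xi4 (n := n) R τu τv τh) *ᵥ ξ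
      = (1 - τu - τv - τh) + τu * (dotProduct (fun i => u i) (fun i => u i))
        + τv * (dotProduct (fun i => v i) (R⁻¹.mulVec fun i => v i))
        + τh * (dotProduct (fun i => δh i) (fun i => δh i)) := by
    simp [Xi4, hξ, Matrix.fromBlocks_mulVec, sumElim_dotProduct_sumElim,
      Matrix.smul_mulVec, Matrix.one_mulVec, dotProduct_smul, smul_eq_mul,
      dotProduct, Finset.mul_sum]
    simp only [mul_comm, mul_left_comm, mul_assoc]
    ring
  -- bounds on the individual terms
  have hu2 : dotProduct (fun i => u i) (fun i => u i) ≤ 1 := by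
    rw [hself u]
    nlinarith [norm_nonneg u]
  have hδ2 : dotProduct (fun i => δh i) (fun i => δh i) ≤ 1 := by
    rw [hself δh]
    nlinarith [norm_nonneg δh]
  -- assemble
  have key : ξ ⬝ᵥ ((Phi4 (n₁ := n₁) xhp xhu E₀).transpose * P⁻¹ * Phi4 (n₁ := n₁) xhp xhu E₀) *ᵥ ξ
      ≤ ξ ⬝ᵥ (Xi4 (n := n) R τu τv τh) *ᵥ ξ := by
    have expand : -((Phi4 (n₁ := n₁) xhp xhu E₀).transpose * P⁻¹ * Phi4 (n₁ := n₁) xhp xhu E₀ -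
        Xi4 R τu τv τh -
        τy • ((Psi4 (hM xhp) eh y JhM E₀ Bh).transpose * Psi4 (hM xhp) eh y JhM E₀ Bh)) *ᵥ ξ
        = (Xi4 (n := n) R τu τv τh) *ᵥ ξ
          + τy • (((Psi4 (hM xhp) eh y JhM E₀ Bh).transpose * Psi4 (hM xhp) eh y JhM E₀ Bh) *ᵥ ξ)
          - ((Phi4 (n₁ := n₁) xhp xhu E₀).transpose * P⁻¹ * Phi4 (n₁ := n₁) xhp xhu E₀) *ᵥ ξ := by
      simp [Matrix.sub_mulVec, Matrix.neg_mulVec, Matrix.smul_mulVec]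
      abel
    rw [expand] at hq
    rw [dotProduct_sub, dotProduct_add, dotProduct_smul] at hq
    rw [eΨ] at hq
    simp at hq
    linarith
  rw [eΦ, eΞ] at key
  nlinarith [mul_le_mul_of_nonneg_left hu2 hτu, mul_le_mul_of_nonneg_left hv hτv,
    mul_le_mul_of_nonneg_left hδ2 hτh]
end
end

section
/- (Determinant identity for the difference of Jacobians, from the proof of the Remainder Lemma.) For all p, q ∈ ℝ² with p ≠ o and q ≠ o, det(J_h(p) − J_h(q)) = ( r(p)·r(q) − ((p₁−a)(q₁−a) + (p₂−b)(q₂−b)) ) · ( r(p) + r(q) ) / ( r(p)² · r(q)² ). -/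
noncomputable section

/-- Matrix–vector multiplication, viewed as a map on the Euclidean plane. -/
def mv (M : Matrix (Fin 2) (Fin 2) ℝ) (u : EuclideanSpace ℝ (Fin 2)) :
    EuclideanSpace ℝ (Fin 2) := WithLp.toLp 2 (M.mulVec u)

/-- Range `r(p) = √((p₁−a)² + (p₂−b)²)` to the sensor located at `(a, b)`. -/
def rr (a b : ℝ) (p : EuclideanSpace ℝ (Fin 2)) : ℝ :=
  Real.sqrt ((p 0 - a) ^ 2 + (p 1 - b) ^ 2)

/-- Bearing `θ(p)`: polar angle in `(−π, π]` of the complex number `(p₁−a) + i(p₂−b)`. -/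
def theta (a b : ℝ) (p : EuclideanSpace ℝ (Fin 2)) : ℝ :=
  Complex.arg ⟨p 0 - a, p 1 - b⟩

/-- Jacobian matrix of the range–bearing measurement map at `p`. -/
def Jh (a b : ℝ) (p : EuclideanSpace ℝ (Fin 2)) : Matrix (Fin 2) (Fin 2) ℝ :=
  !![(p 0 - a) / rr a b p, (p 1 - b) / rr a b p;
     -(p 1 - b) / (rr a b p) ^ 2, (p 0 - a) / (rr a b p) ^ 2]

/-- The range–bearing measurement map `h(p) = (r(p), θ(p))`. -/
def hMeas (a b : ℝ) (p : EuclideanSpace ℝ (Fin 2)) : EuclideanSpace ℝ (Fin 2) :=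
  WithLp.toLp 2 ![rr a b p, theta a b p]

/-- The linearization remainder `g(u) = h(x + Eu) − h(x) − J_h(x)·(Eu)`. -/
def gRem (a b : ℝ) (x : EuclideanSpace ℝ (Fin 2)) (E : Matrix (Fin 2) (Fin 2) ℝ)
    (u : EuclideanSpace ℝ (Fin 2)) : EuclideanSpace ℝ (Fin 2) :=
  hMeas a b (x + mv E u) - hMeas a b x - mv (Jh a b x) (mv E u)

lemma pos_aux (a b : ℝ) (p : EuclideanSpace ℝ (Fin 2))
    (hp : p ≠ (WithLp.toLp 2 ![a, b] : EuclideanSpace ℝ (Fin 2))) :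
    0 < (p 0 - a) ^ 2 + (p 1 - b) ^ 2 := by
  by_contra h
  push_neg at h
  have h0 : p 0 - a = 0 := by nlinarith [sq_nonneg (p 0 - a), sq_nonneg (p 1 - b)]
  have h1 : p 1 - b = 0 := by nlinarith [sq_nonneg (p 0 - a), sq_nonneg (p 1 - b)]
  apply hp
  ext i
  fin_cases i <;> simp_all <;> linarith


/-- **Determinant identity for the difference of Jacobians.** -/
theorem det_jacobianDiff_formula
    (a b : ℝ) (p q : EuclideanSpace ℝ (Fin 2))
    (hp : p ≠ (WithLp.toLp 2 ![a, b] : EuclideanSpace ℝ (Fin 2)))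
    (hq : q ≠ (WithLp.toLp 2 ![a, b] : EuclideanSpace ℝ (Fin 2))) :
    (Jh a b p - Jh a b q).det =
      (rr a b p * rr a b q - ((p 0 - a) * (q 0 - a) + (p 1 - b) * (q 1 - b))) *
        (rr a b p + rr a b q) / ((rr a b p) ^ 2 * (rr a b q) ^ 2) := by
  have hpS := pos_aux a b p hp
  have hqS := pos_aux a b q hq
  have hrp : 0 < rr a b p := Real.sqrt_pos.mpr hpS
  have hrq : 0 < rr a b q := Real.sqrt_pos.mpr hqS
  have hrp2 : (rr a b p) ^ 2 = (p 0 - a) ^ 2 + (p 1 - b) ^ 2 := Real.sq_sqrt hpS.le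
  have hrq2 : (rr a b q) ^ 2 = (q 0 - a) ^ 2 + (q 1 - b) ^ 2 := Real.sq_sqrt hqS.le
  have e1 : (Jh a b p - Jh a b q).det =
      ((p 0 - a) ^ 2 + (p 1 - b) ^ 2) / (rr a b p) ^ 3
      + ((q 0 - a) ^ 2 + (q 1 - b) ^ 2) / (rr a b q) ^ 3
      - ((p 0 - a) * (q 0 - a) + (p 1 - b) * (q 1 - b)) / (rr a b p * (rr a b q) ^ 2)
      - ((p 0 - a) * (q 0 - a) + (p 1 - b) * (q 1 - b)) / ((rr a b p) ^ 2 * rr a b q) := by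
    simp only [Jh, Matrix.det_fin_two, Matrix.sub_apply, Matrix.cons_val', Matrix.cons_val_zero,
      Matrix.cons_val_one, Matrix.head_cons, Matrix.empty_val', Matrix.cons_val_fin_one,
      Matrix.head_fin_const, Matrix.of_apply]
    field_simp
    ring
  rw [e1, ← hrp2, ← hrq2]
  field_simp
  ring
end
end
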